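/- Let G be a bipartite graph on vertex set X ⊔ Y. Then: (i) G is row-nested if and only if G has no vertex-induced subgraph G_{X'⊔Y'} isomorphic to two disjoint edges; (ii) G is nearly row-nested if and only if G has no vertex-induced subgraph isomorphic to a 6-cycle and none isomorphic to the disjoint union of an edge with a two-edge path whose both endpoints lie in Y; (iii) G is horizontal if and only if G has no vertex-induced subgraph isomorphic to a two-edge path whose both endpoints lie in X; (iv) G is horizontal-vertical if and only if G has no vertex-induced subgraph isomorphic to a three-edge path and none isomorphic to a 4-cycle. -/
import Mathlib


open scoped Classical

noncomputable section

namespace BipartiteGraphs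

variable {A B : Type}

/-- The row `R_x` of the vertex `x ∈ X` in a bipartite graph `G` on `X ⊔ Y`:
its set of neighbours in `Y`. -/
def row (G : SimpleGraph (A ⊕ B)) (a : A) : Set B := {b | G.Adj (Sum.inl a) (Sum.inr b)}

/-- `G` is bipartite with respect to `A ⊔ B`: every edge goes between the two parts. -/
def IsBip (G : SimpleGraph (A ⊕ B)) : Prop :=
  (∀ a a' : A, ¬ G.Adj (Sum.inl a) (Sum.inl a')) ∧
  (∀ b b' : B, ¬ G.Adj (Sum.inr b) (Sum.inr b'))

/-- `G` is row-nested:  the rows are totally ordered under inclusion. -/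
def RowNested (G : SimpleGraph (A ⊕ B)) : Prop :=
  ∀ a a' : A, row G a ⊆ row G a' ∨ row G a' ⊆ row G a

/-- `G` is nearly row-nested:  rows of different cardinalities are nested, and for each
cardinality `c`, (whenever a row of cardinality `c` exists) the intersection of the rows
of cardinality `c` has cardinality `c - 1` or `c`. -/
def NearlyRowNested (G : SimpleGraph (A ⊕ B)) : Prop :=
  (∀ a a' : A, (row G a).ncard < (row G a').ncard → row G a ⊂ row G a') ∧
  (∀ c : ℕ, {a : A | (row G a).ncard = c}.Nonempty →
    ((⋂ a ∈ {a : A | (row G a).ncard = c}, row G a).ncard = c - 1 ∨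
     (⋂ a ∈ {a : A | (row G a).ncard = c}, row G a).ncard = c))

/-- `G` is horizontal:  every cell of its diagram is alone within its column. -/
def Horizontal (G : SimpleGraph (A ⊕ B)) : Prop :=
  ∀ (a a' : A) (b : B), G.Adj (Sum.inl a) (Sum.inr b) → G.Adj (Sum.inl a') (Sum.inr b) →
    a = a'

/-- `G` is horizontal-vertical:  every cell of its diagram is alone within its column or
alone within its row (or both). -/
def HorizontalVertical (G : SimpleGraph (A ⊕ B)) : Prop :=
  ∀ (a : A) (b : B), G.Adj (Sum.inl a) (Sum.inr b) →
    ((∀ a' : A, G.Adj (Sum.inl a') (Sum.inr b) → a' = a) ∨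
     (∀ b' : B, G.Adj (Sum.inl a) (Sum.inr b') → b' = b))

/-- `G` has a vertex-induced subgraph isomorphic to two disjoint edges. -/
def HasTwoDisjointEdges (G : SimpleGraph (A ⊕ B)) : Prop :=
  ∃ (a₁ a₂ : A) (b₁ b₂ : B), a₁ ≠ a₂ ∧ b₁ ≠ b₂ ∧
    G.Adj (Sum.inl a₁) (Sum.inr b₁) ∧ G.Adj (Sum.inl a₂) (Sum.inr b₂) ∧
    ¬ G.Adj (Sum.inl a₁) (Sum.inr b₂) ∧ ¬ G.Adj (Sum.inl a₂) (Sum.inr b₁)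

/-- `G` has a vertex-induced subgraph isomorphic to a `6`-cycle. -/
def HasInducedSixCycle (G : SimpleGraph (A ⊕ B)) : Prop :=
  ∃ (a₁ a₂ a₃ : A) (b₁ b₂ b₃ : B),
    a₁ ≠ a₂ ∧ a₁ ≠ a₃ ∧ a₂ ≠ a₃ ∧ b₁ ≠ b₂ ∧ b₁ ≠ b₃ ∧ b₂ ≠ b₃ ∧
    G.Adj (Sum.inl a₁) (Sum.inr b₁) ∧ G.Adj (Sum.inl a₁) (Sum.inr b₃) ∧
    G.Adj (Sum.inl a₂) (Sum.inr b₁) ∧ G.Adj (Sum.inl a₂) (Sum.inr b₂) ∧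
    G.Adj (Sum.inl a₃) (Sum.inr b₂) ∧ G.Adj (Sum.inl a₃) (Sum.inr b₃) ∧
    ¬ G.Adj (Sum.inl a₁) (Sum.inr b₂) ∧ ¬ G.Adj (Sum.inl a₂) (Sum.inr b₃) ∧
    ¬ G.Adj (Sum.inl a₃) (Sum.inr b₁)

/-- `G` has a vertex-induced subgraph isomorphic to the disjoint union of an edge with a
two-edge path whose endpoints both lie in `Y`. -/
def HasEdgePlusCherryY (G : SimpleGraph (A ⊕ B)) : Prop :=
  ∃ (a₁ a₂ : A) (b₁ b₂ b₃ : B), a₁ ≠ a₂ ∧ b₁ ≠ b₂ ∧ b₁ ≠ b₃ ∧ b₂ ≠ b₃ ∧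
    G.Adj (Sum.inl a₁) (Sum.inr b₁) ∧
    G.Adj (Sum.inl a₂) (Sum.inr b₂) ∧ G.Adj (Sum.inl a₂) (Sum.inr b₃) ∧
    ¬ G.Adj (Sum.inl a₁) (Sum.inr b₂) ∧ ¬ G.Adj (Sum.inl a₁) (Sum.inr b₃) ∧
    ¬ G.Adj (Sum.inl a₂) (Sum.inr b₁)

/-- `G` has a vertex-induced subgraph isomorphic to a two-edge path whose endpoints both
lie in `X`. -/
def HasCherryX (G : SimpleGraph (A ⊕ B)) : Prop :=
  ∃ (a₁ a₂ : A) (b : B), a₁ ≠ a₂ ∧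
    G.Adj (Sum.inl a₁) (Sum.inr b) ∧ G.Adj (Sum.inl a₂) (Sum.inr b)

/-- `G` has a vertex-induced subgraph isomorphic to a three-edge path. -/
def HasInducedP4 (G : SimpleGraph (A ⊕ B)) : Prop :=
  ∃ (a₁ a₂ : A) (b₁ b₂ : B), a₁ ≠ a₂ ∧ b₁ ≠ b₂ ∧
    G.Adj (Sum.inl a₁) (Sum.inr b₁) ∧ G.Adj (Sum.inl a₂) (Sum.inr b₁) ∧
    G.Adj (Sum.inl a₂) (Sum.inr b₂) ∧ ¬ G.Adj (Sum.inl a₁) (Sum.inr b₂)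

/-- `G` has a vertex-induced subgraph isomorphic to a `4`-cycle. -/
def HasFourCycle (G : SimpleGraph (A ⊕ B)) : Prop :=
  ∃ (a₁ a₂ : A) (b₁ b₂ : B), a₁ ≠ a₂ ∧ b₁ ≠ b₂ ∧
    G.Adj (Sum.inl a₁) (Sum.inr b₁) ∧ G.Adj (Sum.inl a₂) (Sum.inr b₁) ∧
    G.Adj (Sum.inl a₂) (Sum.inr b₂) ∧ G.Adj (Sum.inl a₁) (Sum.inr b₂)

lemma two_more [Fintype B] {s t : Set B} {x y : B} (hst : s ⊆ t) (hx : x ∈ t) (hy : y ∈ t)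
    (hxs : x ∉ s) (hys : y ∉ s) (hxy : x ≠ y) : s.ncard + 2 ≤ t.ncard := by
  have h1 : insert x (insert y s) ⊆ t := Set.insert_subset hx (Set.insert_subset hy hst)
  have h2 : (insert x (insert y s)).ncard = s.ncard + 2 := by
    rw [Set.ncard_insert_of_notMem (by simp [hxy, hxs]) (Set.toFinite _),
      Set.ncard_insert_of_notMem hys (Set.toFinite _)]
  have := Set.ncard_le_ncard h1 (Set.toFinite _)
  omega

lemma epc_of [Fintype B] {G : SimpleGraph (A ⊕ B)} (hEPC : ¬ HasEdgePlusCherryY G) {a a' : A}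
    {b₁ : B} (hb₁ : b₁ ∈ row G a) (hb₁' : b₁ ∉ row G a')
    (h2 : (row G a' ∩ row G a).ncard + 2 ≤ (row G a').ncard) : False := by
  have hkey := Set.ncard_inter_add_ncard_diff_eq_ncard (row G a') (row G a) (Set.toFinite _)
  have hdiff : 1 < (row G a' \ row G a).ncard := by omega
  obtain ⟨b₂, b₃, hb₂, hb₃, hne⟩ := (Set.one_lt_ncard_iff (Set.toFinite _)).mp hdiff
  exact hEPC ⟨a, a', b₁, b₂, b₃,
    (by rintro rfl; exact hb₁' hb₁),
    (by rintro rfl; exact hb₂.2 hb₁),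
    (by rintro rfl; exact hb₃.2 hb₁),
    hne, hb₁, hb₂.1, hb₃.1, hb₂.2, hb₃.2, hb₁'⟩

lemma clause2 [Fintype B] {G : SimpleGraph (A ⊕ B)} (hC6 : ¬ HasInducedSixCycle G)
    (hEPC : ¬ HasEdgePlusCherryY G) {c : ℕ} {a₀ : A} (ha₀ : (row G a₀).ncard = c) :
    ((⋂ a ∈ {a : A | (row G a).ncard = c}, row G a).ncard = c - 1 ∨
     (⋂ a ∈ {a : A | (row G a).ncard = c}, row G a).ncard = c) := by
  by_contra hI
  push_neg at hI
  obtain ⟨hI1, hI2⟩ := hI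
  set I := ⋂ a ∈ {a : A | (row G a).ncard = c}, row G a with hIdef
  have hIsub : ∀ a : A, (row G a).ncard = c → I ⊆ row G a := fun a ha =>
    Set.biInter_subset_of_mem ha
  have hIc : I.ncard ≤ c := ha₀ ▸ Set.ncard_le_ncard (hIsub a₀ ha₀) (Set.toFinite _)
  have hc2 : 2 ≤ c := by omega
  have hIc2 : I.ncard + 2 ≤ c := by omega
  have stepA : ∀ a a' : A, (row G a).ncard = c → (row G a').ncard = c →
      c ≤ (row G a ∩ row G a').ncard + 1 := by
    intro a a' ha ha'
    by_contra h
    push_neg at h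
    have hb : ¬ row G a ⊆ row G a' := by
      intro hsub
      rw [Set.inter_eq_left.mpr hsub, ha] at h
      omega
    obtain ⟨b₁, hb₁, hb₁'⟩ := Set.not_subset.mp hb
    refine epc_of hEPC hb₁ hb₁' ?_
    rw [Set.inter_comm (row G a') (row G a), ha']
    omega
  have stepB : ∃ a₁ a₂ : A, (row G a₁).ncard = c ∧ (row G a₂).ncard = c ∧
      row G a₁ ≠ row G a₂ := by
    by_contra h
    push_neg at h
    have hsub : row G a₀ ⊆ I := by
      intro x hx
      apply Set.mem_biInter
      intro a ha
      rw [← h a₀ a ha₀ ha]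
      exact hx
    have := Set.ncard_le_ncard hsub (Set.toFinite _)
    omega
  obtain ⟨a₁, a₂, h1, h2, h12⟩ := stepB
  have hA12 := stepA a₁ a₂ h1 h2
  have hlt12 : (row G a₁ ∩ row G a₂).ncard < c := by
    have hle : (row G a₁ ∩ row G a₂).ncard ≤ c :=
      h1 ▸ Set.ncard_le_ncard Set.inter_subset_left (Set.toFinite _)
    rcases lt_or_eq_of_le hle with h | h
    · exact h
    · exfalso
      have e1 : row G a₁ ∩ row G a₂ = row G a₁ :=
        Set.eq_of_subset_of_ncard_le Set.inter_subset_left (by omega) (Set.toFinite _)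
      have e2 : row G a₁ ∩ row G a₂ = row G a₂ :=
        Set.eq_of_subset_of_ncard_le Set.inter_subset_right (by omega) (Set.toFinite _)
      exact h12 (e1.symm.trans e2)
  have stepC : ∃ a₃ : A, (row G a₃).ncard = c ∧ ¬ (row G a₁ ∩ row G a₂ ⊆ row G a₃) := by
    by_contra h
    push_neg at h
    have hsub : row G a₁ ∩ row G a₂ ⊆ I := by
      intro x hx
      apply Set.mem_biInter
      intro a ha
      exact h a ha hx
    have hle := Set.ncard_le_ncard hsub (Set.toFinite _)
    omega
  obtain ⟨a₃, h3, hns⟩ := stepC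
  obtain ⟨b₁, hb₁, hb₁3⟩ := Set.not_subset.mp hns
  have hA13 := stepA a₁ a₃ h1 h3
  have hA23 := stepA a₂ a₃ h2 h3
  have stepD : ∃ b₂, b₂ ∈ row G a₂ ∩ row G a₃ ∧ b₂ ∉ row G a₁ := by
    by_contra h
    push_neg at h
    have hsub : row G a₂ ∩ row G a₃ ⊆ row G a₁ ∩ row G a₂ := fun x hx => ⟨h x hx, hx.1⟩
    have hle : (row G a₁ ∩ row G a₂).ncard ≤ (row G a₂ ∩ row G a₃).ncard := by
      have := Set.ncard_le_ncard (Set.inter_subset_left : row G a₂ ∩ row G a₃ ⊆ row G a₂)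
        (Set.toFinite _)
      omega
    have heq : row G a₂ ∩ row G a₃ = row G a₁ ∩ row G a₂ :=
      Set.eq_of_subset_of_ncard_le hsub hle (Set.toFinite _)
    have : b₁ ∈ row G a₂ ∩ row G a₃ := by rw [heq]; exact hb₁
    exact hb₁3 this.2
  obtain ⟨b₂, hb₂, hb₂1⟩ := stepD
  have stepE : ∃ b₃, b₃ ∈ row G a₁ ∩ row G a₃ ∧ b₃ ∉ row G a₂ := by
    by_contra h
    push_neg at h
    have hsub : row G a₁ ∩ row G a₃ ⊆ row G a₁ ∩ row G a₂ := fun x hx => ⟨hx.1, h x hx⟩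
    have hle : (row G a₁ ∩ row G a₂).ncard ≤ (row G a₁ ∩ row G a₃).ncard := by
      have := Set.ncard_le_ncard (Set.inter_subset_left : row G a₁ ∩ row G a₃ ⊆ row G a₁)
        (Set.toFinite _)
      omega
    have heq : row G a₁ ∩ row G a₃ = row G a₁ ∩ row G a₂ :=
      Set.eq_of_subset_of_ncard_le hsub hle (Set.toFinite _)
    have : b₁ ∈ row G a₁ ∩ row G a₃ := by rw [heq]; exact hb₁
    exact hb₁3 this.2
  obtain ⟨b₃, hb₃, hb₃2⟩ := stepE
  exact hC6 ⟨a₁, a₂, a₃, b₁, b₂, b₃,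
    (by rintro rfl; exact h12 rfl),
    (by rintro rfl; exact hb₁3 hb₁.1),
    (by rintro rfl; exact hb₁3 hb₁.2),
    (by rintro rfl; exact hb₂1 hb₁.1),
    (by rintro rfl; exact hb₁3 hb₃.2),
    (by rintro rfl; exact hb₂1 hb₃.1),
    hb₁.1, hb₃.1, hb₁.2, hb₂.1, hb₂.2, hb₃.2, hb₂1, hb₃2, hb₁3⟩

/-- **Statement 17.**  Forbidden-induced-subgraph characterizations of the row-nested,
nearly row-nested, horizontal, and horizontal-vertical bipartite graphs. -/
theorem forbidden_subgraph_characterizations [Fintype A] [Fintype B]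
    (G : SimpleGraph (A ⊕ B)) (hbip : IsBip G) :
    (RowNested G ↔ ¬ HasTwoDisjointEdges G) ∧
    (NearlyRowNested G ↔ (¬ HasInducedSixCycle G ∧ ¬ HasEdgePlusCherryY G)) ∧
    (Horizontal G ↔ ¬ HasCherryX G) ∧
    (HorizontalVertical G ↔ (¬ HasInducedP4 G ∧ ¬ HasFourCycle G)) := by
  refine ⟨?_, ?_, ?_, ?_⟩
  · -- row-nested
    constructor
    · rintro h ⟨a₁, a₂, b₁, b₂, ha, hb, h11, h22, h12, h21⟩
      rcases h a₁ a₂ with hs | hs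
      · exact h21 (hs h11)
      · exact h12 (hs h22)
    · intro h a a'
      by_contra hc
      push_neg at hc
      obtain ⟨b₁, hb₁, hb₁'⟩ := Set.not_subset.mp hc.1
      obtain ⟨b₂, hb₂, hb₂'⟩ := Set.not_subset.mp hc.2
      exact h ⟨a, a', b₁, b₂,
        (by rintro rfl; exact hb₁' hb₁),
        (by rintro rfl; exact hb₂' hb₁),
        hb₁, hb₂, hb₂', hb₁'⟩
  · -- nearly row-nested
    constructor
    · rintro ⟨h1, h2⟩
      have key : ∀ a a' : A, ∀ b b' : B, b ∈ row G a → b ∉ row G a' → b' ∈ row G a' →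
          b' ∉ row G a → (row G a).ncard = (row G a').ncard := by
        intro a a' b b' hb hb' hb'2 hb'3
        by_contra h
        rcases lt_or_gt_of_ne h with hl | hl
        · exact hb' ((h1 a a' hl).subset hb)
        · exact hb'3 ((h1 a' a hl).subset hb'2)
      constructor
      · rintro ⟨a₁, a₂, a₃, b₁, b₂, b₃, ha12, ha13, ha23, hb12, hb13, hb23,
          e11, e13, e21, e22, e32, e33, n12, n23, n31⟩
        have ec12 : (row G a₁).ncard = (row G a₂).ncard := key a₁ a₂ b₃ b₂ e13 n23 e22 n12
        have ec23 : (row G a₂).ncard = (row G a₃).ncard := key a₂ a₃ b₁ b₃ e21 n31 e33 n23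
        set c := (row G a₁).ncard with hc
        have hI1 : (⋂ a ∈ {a : A | (row G a).ncard = c}, row G a) ⊆ row G a₁ :=
          Set.biInter_subset_of_mem rfl
        have hI2 : (⋂ a ∈ {a : A | (row G a).ncard = c}, row G a) ⊆ row G a₂ :=
          Set.biInter_subset_of_mem ec12.symm
        have hI3 : (⋂ a ∈ {a : A | (row G a).ncard = c}, row G a) ⊆ row G a₃ :=
          Set.biInter_subset_of_mem (ec12.trans ec23).symm
        have hcpos : 0 < c := (Set.ncard_pos (Set.toFinite _)).mpr ⟨b₁, e11⟩
        rcases h2 c ⟨a₁, rfl⟩ with hcc | hcc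
        · have hb₁I : b₁ ∉ (⋂ a ∈ {a : A | (row G a).ncard = c}, row G a) :=
            fun h => n31 (hI3 h)
          have hb₃I : b₃ ∉ (⋂ a ∈ {a : A | (row G a).ncard = c}, row G a) :=
            fun h => n23 (hI2 h)
          have := two_more hI1 e11 e13 hb₁I hb₃I hb13
          omega
        · have heq : (⋂ a ∈ {a : A | (row G a).ncard = c}, row G a) = row G a₂ :=
            Set.eq_of_subset_of_ncard_le hI2 (by omega) (Set.toFinite _)
          have : b₁ ∈ (⋂ a ∈ {a : A | (row G a).ncard = c}, row G a) := by
            rw [heq]; exact e21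
          exact n31 (hI3 this)
      · rintro ⟨a₁, a₂, b₁, b₂, b₃, ha, hb12, hb13, hb23, e11, e22, e23, n12, n13, n21⟩
        have ec12 : (row G a₁).ncard = (row G a₂).ncard := key a₁ a₂ b₁ b₂ e11 n21 e22 n12
        set c := (row G a₁).ncard with hc
        have hI1 : (⋂ a ∈ {a : A | (row G a).ncard = c}, row G a) ⊆ row G a₁ :=
          Set.biInter_subset_of_mem rfl
        have hI2 : (⋂ a ∈ {a : A | (row G a).ncard = c}, row G a) ⊆ row G a₂ :=
          Set.biInter_subset_of_mem ec12.symm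
        have hb₂I : b₂ ∉ (⋂ a ∈ {a : A | (row G a).ncard = c}, row G a) :=
          fun h => n12 (hI1 h)
        have hb₃I : b₃ ∉ (⋂ a ∈ {a : A | (row G a).ncard = c}, row G a) :=
          fun h => n13 (hI1 h)
        have htwo := two_more hI2 e22 e23 hb₂I hb₃I hb23
        have hcpos : 0 < c := (Set.ncard_pos (Set.toFinite _)).mpr ⟨b₁, e11⟩
        rcases h2 c ⟨a₁, rfl⟩ with hcc | hcc <;> omega
    · rintro ⟨hC6, hEPC⟩
      constructor
      · intro a a' hlt
        by_contra hns
        have hsub : ¬ row G a ⊆ row G a' := by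
          intro h
          refine hns ⟨h, fun h' => ?_⟩
          have := Set.ncard_le_ncard h' (Set.toFinite _)
          omega
        obtain ⟨b₁, hb₁, hb₁'⟩ := Set.not_subset.mp hsub
        have hss : row G a' ∩ row G a ⊂ row G a :=
          ⟨Set.inter_subset_right, fun h => hb₁' (h hb₁).1⟩
        have hlt2 := Set.ncard_lt_ncard hss (Set.toFinite _)
        exact epc_of hEPC hb₁ hb₁' (by omega)
      · intro c hne
        obtain ⟨a₀, ha₀⟩ := hne
        exact clause2 hC6 hEPC ha₀
  · -- horizontal
    constructor
    · rintro h ⟨a₁, a₂, b, hne, h1, h2⟩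
      exact hne (h a₁ a₂ b h1 h2)
    · intro h a a' b h1 h2
      by_contra hne
      exact h ⟨a, a', b, hne, h1, h2⟩
  · -- horizontal-vertical
    constructor
    · intro h
      constructor
      · rintro ⟨a₁, a₂, b₁, b₂, ha, hb, e11, e21, e22, n12⟩
        rcases h a₂ b₁ e21 with hcol | hrow
        · exact ha (hcol a₁ e11)
        · exact hb (hrow b₂ e22).symm
      · rintro ⟨a₁, a₂, b₁, b₂, ha, hb, e11, e21, e22, e12⟩
        rcases h a₂ b₁ e21 with hcol | hrow
        · exact ha (hcol a₁ e11)
        · exact hb (hrow b₂ e22).symm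
    · rintro ⟨hp4, hc4⟩ a b hab
      by_contra h
      push_neg at h
      obtain ⟨⟨a', ha', hane⟩, ⟨b', hb', hbne⟩⟩ := h
      by_cases hx : G.Adj (Sum.inl a') (Sum.inr b')
      · exact hc4 ⟨a', a, b, b', hane, Ne.symm hbne, ha', hab, hb', hx⟩
      · exact hp4 ⟨a', a, b, b', hane, Ne.symm hbne, ha', hab, hb', hx⟩

end BipartiteGraphs
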